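/- Correctness of normalization for JLC: for every term Γ ⊢ t : A of JLC there exists a normal form n with Γ ⊢nf n : A such that Γ ⊢ t ≡ n : A in the equational theory of JLC (viewing the normal form as a term via the evident embedding). -/

import Mathlib

/-- Types of JLC: base, unit, products, functions and the modal type ◇. -/
inductive Ty : Type
  | base : Ty
  | unit : Ty
  | prod : Ty → Ty → Ty
  | arr : Ty → Ty → Ty
  | dia : Ty → Ty

/-- Typing contexts (de Bruijn; the head is the most recently bound variable). -/
abbrev Ctx := List Ty

/-- Raw terms of JLC with de Bruijn indices. -/
inductive Tm : Type
  | var : ℕ → Tm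
  | unit : Tm
  | pair : Tm → Tm → Tm
  | fst : Tm → Tm
  | snd : Tm → Tm
  | lam : Tm → Tm
  | app : Tm → Tm → Tm
  | letm : Tm → Tm → Tm           -- letmap x = t in u
  | letj : Tm → Tm → Tm           -- letjoin x = t in u

/-- Lifting of a renaming under a binder. -/
def liftRen (ρ : ℕ → ℕ) : ℕ → ℕ
  | 0 => 0
  | n + 1 => ρ n + 1

/-- Renaming of the variables of a term. -/
def rename (ρ : ℕ → ℕ) : Tm → Tm
  | .var n => .var (ρ n)
  | .unit => .unit
  | .pair t u => .pair (rename ρ t) (rename ρ u)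
  | .fst t => .fst (rename ρ t)
  | .snd t => .snd (rename ρ t)
  | .lam t => .lam (rename (liftRen ρ) t)
  | .app t u => .app (rename ρ t) (rename ρ u)
  | .letm t u => .letm (rename ρ t) (rename (liftRen ρ) u)
  | .letj t u => .letj (rename ρ t) (rename (liftRen ρ) u)

/-- Capture-avoiding substitution of `u` for the variable `k`. -/
def subst (k : ℕ) (u : Tm) : Tm → Tm
  | .var n => if n < k then .var n else if n = k then rename (· + k) u else .var (n - 1)
  | .unit => .unit
  | .pair t t' => .pair (subst k u t) (subst k u t')
  | .fst t => .fst (subst k u t)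
  | .snd t => .snd (subst k u t)
  | .lam t => .lam (subst (k + 1) u t)
  | .app t t' => .app (subst k u t) (subst k u t')
  | .letm t t' => .letm (subst k u t) (subst (k + 1) u t')
  | .letj t t' => .letj (subst k u t) (subst (k + 1) u t')

/-- The typing judgment `Γ ⊢ t : A` of JLC, with the letmap and letjoin rules. -/
inductive HasTy : Ctx → Tm → Ty → Prop
  | var {Γ n A} : Γ[n]? = some A → HasTy Γ (.var n) A
  | unit {Γ} : HasTy Γ .unit .unit
  | pair {Γ t u A B} : HasTy Γ t A → HasTy Γ u B → HasTy Γ (.pair t u) (.prod A B)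
  | fst {Γ t A B} : HasTy Γ t (.prod A B) → HasTy Γ (.fst t) A
  | snd {Γ t A B} : HasTy Γ t (.prod A B) → HasTy Γ (.snd t) B
  | lam {Γ t A B} : HasTy (A :: Γ) t B → HasTy Γ (.lam t) (.arr A B)
  | app {Γ t u A B} : HasTy Γ t (.arr A B) → HasTy Γ u A → HasTy Γ (.app t u) B
  | letm {Γ t u A B} : HasTy Γ t (.dia A) → HasTy (A :: Γ) u B →
      HasTy Γ (.letm t u) (.dia B)
  | letj {Γ t u A B} : HasTy Γ t (.dia A) → HasTy (A :: Γ) u (.dia B) →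
      HasTy Γ (.letj t u) (.dia B)

/-- The equational theory `Γ ⊢ t ≡ u : A` of JLC: the congruence generated by
⊤-η, ×-β, ×-η, →-β, →-η, ◇-η, ◇-β₁, ◇-β₂, ◇-com and ◇-ass. -/
inductive EqTm : Ctx → Tm → Tm → Ty → Prop
  | refl {Γ t A} : HasTy Γ t A → EqTm Γ t t A
  | symm {Γ t u A} : EqTm Γ t u A → EqTm Γ u t A
  | trans {Γ t u v A} : EqTm Γ t u A → EqTm Γ u v A → EqTm Γ t v A
  | pair_congr {Γ t t' u u' A B} : EqTm Γ t t' A → EqTm Γ u u' B →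
      EqTm Γ (.pair t u) (.pair t' u') (.prod A B)
  | fst_congr {Γ t t' A B} : EqTm Γ t t' (.prod A B) → EqTm Γ (.fst t) (.fst t') A
  | snd_congr {Γ t t' A B} : EqTm Γ t t' (.prod A B) → EqTm Γ (.snd t) (.snd t') B
  | lam_congr {Γ t t' A B} : EqTm (A :: Γ) t t' B → EqTm Γ (.lam t) (.lam t') (.arr A B)
  | app_congr {Γ t t' u u' A B} : EqTm Γ t t' (.arr A B) → EqTm Γ u u' A →
      EqTm Γ (.app t u) (.app t' u') B
  | letm_congr {Γ t t' u u' A B} : EqTm Γ t t' (.dia A) → EqTm (A :: Γ) u u' B →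
      EqTm Γ (.letm t u) (.letm t' u') (.dia B)
  | letj_congr {Γ t t' u u' A B} : EqTm Γ t t' (.dia A) → EqTm (A :: Γ) u u' (.dia B) →
      EqTm Γ (.letj t u) (.letj t' u') (.dia B)
  | unit_eta {Γ t} : HasTy Γ t .unit → EqTm Γ t .unit .unit
  | prod_beta1 {Γ t u A B} : HasTy Γ t A → HasTy Γ u B →
      EqTm Γ (.fst (.pair t u)) t A
  | prod_beta2 {Γ t u A B} : HasTy Γ t A → HasTy Γ u B →
      EqTm Γ (.snd (.pair t u)) u B
  | prod_eta {Γ t A B} : HasTy Γ t (.prod A B) →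
      EqTm Γ t (.pair (.fst t) (.snd t)) (.prod A B)
  | arr_beta {Γ t u A B} : HasTy (A :: Γ) t B → HasTy Γ u A →
      EqTm Γ (.app (.lam t) u) (subst 0 u t) B
  | arr_eta {Γ t A B} : HasTy Γ t (.arr A B) →
      EqTm Γ t (.lam (.app (rename Nat.succ t) (.var 0))) (.arr A B)
  | dia_eta {Γ t A} : HasTy Γ t (.dia A) →
      EqTm Γ t (.letm t (.var 0)) (.dia A)
  | dia_beta1 {Γ t u u' A B C} : HasTy Γ t (.dia A) → HasTy (A :: Γ) u B →
      HasTy (B :: Γ) u' C →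
      EqTm Γ (.letm (.letm t u) u')
        (.letm t (subst 0 u (rename (liftRen Nat.succ) u'))) (.dia C)
  | dia_beta2 {Γ t u u' A B C} : HasTy Γ t (.dia A) → HasTy (A :: Γ) u B →
      HasTy (B :: Γ) u' (.dia C) →
      EqTm Γ (.letj (.letm t u) u')
        (.letj t (subst 0 u (rename (liftRen Nat.succ) u'))) (.dia C)
  | dia_com {Γ t u u' A B C} : HasTy Γ t (.dia A) → HasTy (A :: Γ) u (.dia B) →
      HasTy (B :: Γ) u' C →
      EqTm Γ (.letm (.letj t u) u')
        (.letj t (.letm u (rename (liftRen Nat.succ) u'))) (.dia C)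
  | dia_ass {Γ t u u' A B C} : HasTy Γ t (.dia A) → HasTy (A :: Γ) u (.dia B) →
      HasTy (B :: Γ) u' (.dia C) →
      EqTm Γ (.letj (.letj t u) u')
        (.letj t (.letj u (rename (liftRen Nat.succ) u'))) (.dia C)

mutual
  /-- Neutral terms `Γ ⊢ne n : A` of JLC. -/
  inductive Neu : Ctx → Tm → Ty → Prop
    | var {Γ n A} : Γ[n]? = some A → Neu Γ (.var n) A
    | fst {Γ t A B} : Neu Γ t (.prod A B) → Neu Γ (.fst t) A
    | snd {Γ t A B} : Neu Γ t (.prod A B) → Neu Γ (.snd t) B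
    | app {Γ t u A B} : Neu Γ t (.arr A B) → Nf Γ u A → Neu Γ (.app t u) B

  /-- Normal forms `Γ ⊢nf n : A` of JLC. -/
  inductive Nf : Ctx → Tm → Ty → Prop
    | up {Γ t} : Neu Γ t .base → Nf Γ t .base
    | unit {Γ} : Nf Γ .unit .unit
    | pair {Γ t u A B} : Nf Γ t A → Nf Γ u B → Nf Γ (.pair t u) (.prod A B)
    | lam {Γ t A B} : Nf (A :: Γ) t B → Nf Γ (.lam t) (.arr A B)
    | letm {Γ t u A B} : Neu Γ t (.dia A) → Nf (A :: Γ) u B →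
        Nf Γ (.letm t u) (.dia B)
    | letj {Γ t u A B} : Neu Γ t (.dia A) → Nf (A :: Γ) u (.dia B) →
        Nf Γ (.letj t u) (.dia B)
end

namespace JLCaux

open Tm

/-! ### Substitution algebra -/

/-- Simultaneous substitution: lifting under a binder. -/
def liftSub (σ : ℕ → Tm) : ℕ → Tm
  | 0 => .var 0
  | n + 1 => rename Nat.succ (σ n)

/-- Simultaneous substitution. -/
def ssub (σ : ℕ → Tm) : Tm → Tm
  | .var n => σ n
  | .unit => .unit
  | .pair t u => .pair (ssub σ t) (ssub σ u)
  | .fst t => .fst (ssub σ t)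
  | .snd t => .snd (ssub σ t)
  | .lam t => .lam (ssub (liftSub σ) t)
  | .app t u => .app (ssub σ t) (ssub σ u)
  | .letm t u => .letm (ssub σ t) (ssub (liftSub σ) u)
  | .letj t u => .letj (ssub σ t) (ssub (liftSub σ) u)

def scons (u : Tm) (σ : ℕ → Tm) : ℕ → Tm
  | 0 => u
  | n + 1 => σ n

theorem liftRen_comp (ρ ρ' : ℕ → ℕ) : liftRen (ρ ∘ ρ') = liftRen ρ ∘ liftRen ρ' := by
  funext n; cases n <;> rfl

theorem rename_rename (ρ ρ' : ℕ → ℕ) (t : Tm) :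
    rename ρ (rename ρ' t) = rename (ρ ∘ ρ') t := by
  induction t generalizing ρ ρ' <;> simp [rename, liftRen_comp, *]

theorem liftRen_id : liftRen (fun n => n) = fun n => n := by
  funext n; cases n <;> rfl

theorem rename_id (t : Tm) : rename (fun n => n) t = t := by
  induction t <;> simp [rename, liftRen_id, *]

theorem liftSub_var (ρ : ℕ → ℕ) :
    liftSub (fun n => Tm.var (ρ n)) = fun n => Tm.var (liftRen ρ n) := by
  funext n; cases n <;> rfl

theorem rename_eq_ssub (ρ : ℕ → ℕ) (t : Tm) : rename ρ t = ssub (fun n => .var (ρ n)) t := by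
  induction t generalizing ρ <;> simp [rename, ssub, liftSub_var, *]

theorem liftSub_comp_liftRen (σ : ℕ → Tm) (ρ : ℕ → ℕ) :
    (fun n => liftSub σ (liftRen ρ n)) = liftSub (fun n => σ (ρ n)) := by
  funext n; cases n <;> rfl

theorem ssub_rename (σ : ℕ → Tm) (ρ : ℕ → ℕ) (t : Tm) :
    ssub σ (rename ρ t) = ssub (fun n => σ (ρ n)) t := by
  induction t generalizing σ ρ <;> simp [rename, ssub, liftSub_comp_liftRen, *]

theorem rename_liftSub (ρ : ℕ → ℕ) (σ : ℕ → Tm) :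
    (fun n => rename (liftRen ρ) (liftSub σ n)) = liftSub (fun n => rename ρ (σ n)) := by
  funext n
  cases n with
  | zero => rfl
  | succ n =>
      show rename (liftRen ρ) (rename Nat.succ (σ n)) = rename Nat.succ (rename ρ (σ n))
      rw [rename_rename, rename_rename]; rfl

theorem rename_ssub (ρ : ℕ → ℕ) (σ : ℕ → Tm) (t : Tm) :
    rename ρ (ssub σ t) = ssub (fun n => rename ρ (σ n)) t := by
  induction t generalizing σ ρ <;> simp [rename, ssub, rename_liftSub, *]

theorem ssub_liftSub (σ τ : ℕ → Tm) :
    (fun n => ssub (liftSub σ) (liftSub τ n)) = liftSub (fun n => ssub σ (τ n)) := by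
  funext n
  cases n with
  | zero => rfl
  | succ n =>
      show ssub (liftSub σ) (rename Nat.succ (τ n)) = rename Nat.succ (ssub σ (τ n))
      rw [ssub_rename, rename_ssub]; rfl

theorem ssub_ssub (σ τ : ℕ → Tm) (t : Tm) :
    ssub σ (ssub τ t) = ssub (fun n => ssub σ (τ n)) t := by
  induction t generalizing σ τ <;> simp [ssub, ssub_liftSub, *]

theorem liftSub_var_id : liftSub (fun n => Tm.var n) = fun n => Tm.var n := by
  funext n; cases n <;> rfl

theorem ssub_var (t : Tm) : ssub (fun n => .var n) t = t := by
  induction t <;> simp [ssub, liftSub_var_id, *]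

/-- The single-variable substitution as a simultaneous one. -/
def sk (k : ℕ) (u : Tm) : ℕ → Tm := fun n =>
  if n < k then .var n else if n = k then rename (· + k) u else .var (n - 1)

theorem liftSub_sk (k : ℕ) (u : Tm) : liftSub (sk k u) = sk (k + 1) u := by
  funext n
  cases n with
  | zero => simp [liftSub, sk]
  | succ n =>
      simp only [liftSub, sk]
      by_cases h1 : n < k
      · simp [h1, Nat.succ_lt_succ h1, rename]
      · by_cases h2 : n = k
        · subst h2
          simp [h1, rename_rename]
          rw [show (Nat.succ ∘ (· + n)) = (· + (n+1)) from funext fun m => by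
            simp [Function.comp]; omega]
        · have h3 : ¬ n + 1 < k + 1 := by omega
          have h4 : ¬ n + 1 = k + 1 := by omega
          simp [rename, h1, h2, h3, h4]
          omega

theorem subst_eq_ssub (k : ℕ) (u t : Tm) : subst k u t = ssub (sk k u) t := by
  induction t generalizing k <;> simp [subst, ssub, liftSub_sk, sk, *]

theorem sk_zero (u : Tm) : sk 0 u = scons u Tm.var := by
  funext n
  cases n with
  | zero =>
      simp only [sk, scons]
      rw [show ((· + 0) : ℕ → ℕ) = (fun n => n) from funext fun m => by simp, rename_id]
      simp
  | succ n => simp [sk, scons]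

theorem subst0_eq (u t : Tm) : subst 0 u t = ssub (scons u Tm.var) t := by
  rw [subst_eq_ssub, sk_zero]


/-! ### Renaming and substitution preserve typing -/

theorem ssub_congr {σ τ : ℕ → Tm} (h : ∀ n, σ n = τ n) (t : Tm) : ssub σ t = ssub τ t :=
  congrArg (fun σ => ssub σ t) (funext h)

def Ren (Δ : Ctx) (ρ : ℕ → ℕ) (Γ : Ctx) : Prop :=
  ∀ n A, Γ[n]? = some A → Δ[ρ n]? = some A

theorem Ren.lift {Δ ρ Γ} (h : Ren Δ ρ Γ) (A : Ty) : Ren (A :: Δ) (liftRen ρ) (A :: Γ) := by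
  intro n B hn
  cases n with
  | zero => exact hn
  | succ n => exact h n B hn

theorem Ren.succ (A : Ty) (Γ : Ctx) : Ren (A :: Γ) Nat.succ Γ := fun _ _ h => h

theorem Ren.id (Γ : Ctx) : Ren Γ (fun n => n) Γ := fun _ _ h => h

theorem Ren.comp {Δ ρ Γ E ρ'} (h : Ren Δ ρ Γ) (h' : Ren E ρ' Δ) :
    Ren E (fun n => ρ' (ρ n)) Γ := fun n A hn => h' _ A (h n A hn)

theorem hasTyRename {Γ t A} (h : HasTy Γ t A) :
    ∀ {Δ ρ}, Ren Δ ρ Γ → HasTy Δ (rename ρ t) A := by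
  induction h with
  | var h => exact fun hr => HasTy.var (hr _ _ h)
  | unit => exact fun _ => HasTy.unit
  | pair _ _ ih1 ih2 => exact fun hr => HasTy.pair (ih1 hr) (ih2 hr)
  | fst _ ih => exact fun hr => HasTy.fst (ih hr)
  | snd _ ih => exact fun hr => HasTy.snd (ih hr)
  | lam _ ih => exact fun hr => HasTy.lam (ih (hr.lift _))
  | app _ _ ih1 ih2 => exact fun hr => HasTy.app (ih1 hr) (ih2 hr)
  | letm _ _ ih1 ih2 => exact fun hr => HasTy.letm (ih1 hr) (ih2 (hr.lift _))
  | letj _ _ ih1 ih2 => exact fun hr => HasTy.letj (ih1 hr) (ih2 (hr.lift _))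

def SubTy (Δ : Ctx) (σ : ℕ → Tm) (Γ : Ctx) : Prop :=
  ∀ n A, Γ[n]? = some A → HasTy Δ (σ n) A

theorem SubTy.lift {Δ σ Γ} (h : SubTy Δ σ Γ) (A : Ty) : SubTy (A :: Δ) (liftSub σ) (A :: Γ) := by
  intro n B hn
  cases n with
  | zero =>
      obtain rfl : A = B := by simpa using hn
      exact HasTy.var rfl
  | succ n => exact hasTyRename (h n B hn) (Ren.succ A Δ)

theorem hasTySsub {Γ t A} (h : HasTy Γ t A) :
    ∀ {Δ σ}, SubTy Δ σ Γ → HasTy Δ (ssub σ t) A := by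
  induction h with
  | var h => exact fun hs => hs _ _ h
  | unit => exact fun _ => HasTy.unit
  | pair _ _ ih1 ih2 => exact fun hs => HasTy.pair (ih1 hs) (ih2 hs)
  | fst _ ih => exact fun hs => HasTy.fst (ih hs)
  | snd _ ih => exact fun hs => HasTy.snd (ih hs)
  | lam _ ih => exact fun hs => HasTy.lam (ih (hs.lift _))
  | app _ _ ih1 ih2 => exact fun hs => HasTy.app (ih1 hs) (ih2 hs)
  | letm _ _ ih1 ih2 => exact fun hs => HasTy.letm (ih1 hs) (ih2 (hs.lift _))
  | letj _ _ ih1 ih2 => exact fun hs => HasTy.letj (ih1 hs) (ih2 (hs.lift _))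

theorem hasTy_subst0 {Γ t u A B} (ht : HasTy (A :: Γ) t B) (hu : HasTy Γ u A) :
    HasTy Γ (subst 0 u t) B := by
  rw [subst0_eq]
  refine hasTySsub ht ?_
  intro n C hn
  cases n with
  | zero =>
      obtain rfl : A = C := by simpa using hn
      exact hu
  | succ n => exact HasTy.var hn

theorem hasTy_mid {Γ u u' A B C} (hu' : HasTy (B :: Γ) u' C) (hu : HasTy (A :: Γ) u B) :
    HasTy (A :: Γ) (subst 0 u (rename (liftRen Nat.succ) u')) C := by
  rw [subst0_eq, ssub_rename]
  refine hasTySsub hu' ?_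
  intro n D hn
  cases n with
  | zero =>
      obtain rfl : B = D := by simpa using hn
      exact hu
  | succ n => exact HasTy.var hn

/-! ### Neutrals and normals: renaming and typing -/

mutual
theorem neuRename : ∀ {Γ t A}, Neu Γ t A → ∀ {Δ ρ}, Ren Δ ρ Γ → Neu Δ (rename ρ t) A
  | _, _, _, .var h, _, _, hr => Neu.var (hr _ _ h)
  | _, _, _, .fst h, _, _, hr => Neu.fst (neuRename h hr)
  | _, _, _, .snd h, _, _, hr => Neu.snd (neuRename h hr)
  | _, _, _, .app h hu, _, _, hr => Neu.app (neuRename h hr) (nfRename hu hr)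

theorem nfRename : ∀ {Γ t A}, Nf Γ t A → ∀ {Δ ρ}, Ren Δ ρ Γ → Nf Δ (rename ρ t) A
  | _, _, _, .up h, _, _, hr => Nf.up (neuRename h hr)
  | _, _, _, .unit, _, _, _ => Nf.unit
  | _, _, _, .pair h1 h2, _, _, hr => Nf.pair (nfRename h1 hr) (nfRename h2 hr)
  | _, _, _, .lam h, _, _, hr => Nf.lam (nfRename h (hr.lift _))
  | _, _, _, .letm h1 h2, _, _, hr => Nf.letm (neuRename h1 hr) (nfRename h2 (hr.lift _))
  | _, _, _, .letj h1 h2, _, _, hr => Nf.letj (neuRename h1 hr) (nfRename h2 (hr.lift _))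
end

mutual
theorem neuHasTy : ∀ {Γ t A}, Neu Γ t A → HasTy Γ t A
  | _, _, _, .var h => HasTy.var h
  | _, _, _, .fst h => HasTy.fst (neuHasTy h)
  | _, _, _, .snd h => HasTy.snd (neuHasTy h)
  | _, _, _, .app h hu => HasTy.app (neuHasTy h) (nfHasTy hu)

theorem nfHasTy : ∀ {Γ t A}, Nf Γ t A → HasTy Γ t A
  | _, _, _, .up h => neuHasTy h
  | _, _, _, .unit => HasTy.unit
  | _, _, _, .pair h1 h2 => HasTy.pair (nfHasTy h1) (nfHasTy h2)
  | _, _, _, .lam h => HasTy.lam (nfHasTy h)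
  | _, _, _, .letm h1 h2 => HasTy.letm (neuHasTy h1) (nfHasTy h2)
  | _, _, _, .letj h1 h2 => HasTy.letj (neuHasTy h1) (nfHasTy h2)
end

/-! ### The equational theory is stable under renaming, and presupposes typing -/

theorem rename_congr {ρ ρ' : ℕ → ℕ} (h : ∀ n, ρ n = ρ' n) (t : Tm) :
    rename ρ t = rename ρ' t :=
  congrArg (fun ρ => rename ρ t) (funext h)

theorem rename_subst0 (ρ : ℕ → ℕ) (u t : Tm) :
    rename ρ (subst 0 u t) = subst 0 (rename ρ u) (rename (liftRen ρ) t) := by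
  simp only [subst0_eq, rename_ssub, ssub_rename]
  exact ssub_congr (fun n => by cases n <;> rfl) t

theorem rename_mid (ρ : ℕ → ℕ) (u u' : Tm) :
    rename (liftRen ρ) (subst 0 u (rename (liftRen Nat.succ) u')) =
      subst 0 (rename (liftRen ρ) u) (rename (liftRen Nat.succ) (rename (liftRen ρ) u')) := by
  simp only [subst0_eq, rename_ssub, ssub_rename]
  exact ssub_congr (fun n => by cases n <;> rfl) u'

theorem rename_com (ρ : ℕ → ℕ) (u' : Tm) :
    rename (liftRen (liftRen ρ)) (rename (liftRen Nat.succ) u') =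
      rename (liftRen Nat.succ) (rename (liftRen ρ) u') := by
  simp only [rename_rename]
  exact rename_congr (fun n => by cases n <;> rfl) u'

theorem eqTmRename {Γ t u A} (h : EqTm Γ t u A) :
    ∀ {Δ ρ}, Ren Δ ρ Γ → EqTm Δ (rename ρ t) (rename ρ u) A := by
  induction h with
  | refl h => exact fun hr => EqTm.refl (hasTyRename h hr)
  | symm _ ih => exact fun hr => EqTm.symm (ih hr)
  | trans _ _ ih1 ih2 => exact fun hr => EqTm.trans (ih1 hr) (ih2 hr)
  | pair_congr _ _ ih1 ih2 => exact fun hr => EqTm.pair_congr (ih1 hr) (ih2 hr)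
  | fst_congr _ ih => exact fun hr => EqTm.fst_congr (ih hr)
  | snd_congr _ ih => exact fun hr => EqTm.snd_congr (ih hr)
  | lam_congr _ ih => exact fun hr => EqTm.lam_congr (ih (hr.lift _))
  | app_congr _ _ ih1 ih2 => exact fun hr => EqTm.app_congr (ih1 hr) (ih2 hr)
  | letm_congr _ _ ih1 ih2 => exact fun hr => EqTm.letm_congr (ih1 hr) (ih2 (hr.lift _))
  | letj_congr _ _ ih1 ih2 => exact fun hr => EqTm.letj_congr (ih1 hr) (ih2 (hr.lift _))
  | unit_eta h => exact fun hr => EqTm.unit_eta (hasTyRename h hr)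
  | prod_beta1 ht hu =>
      exact fun hr => EqTm.prod_beta1 (hasTyRename ht hr) (hasTyRename hu hr)
  | prod_beta2 ht hu =>
      exact fun hr => EqTm.prod_beta2 (hasTyRename ht hr) (hasTyRename hu hr)
  | prod_eta h => exact fun hr => EqTm.prod_eta (hasTyRename h hr)
  | arr_beta ht hu =>
      intro Δ ρ hr
      simp only [rename, rename_subst0]
      exact EqTm.arr_beta (hasTyRename ht (hr.lift _)) (hasTyRename hu hr)
  | @arr_eta Γ' t' A' B' h =>
      intro Δ ρ hr
      have e : rename (liftRen ρ) (rename Nat.succ t') = rename Nat.succ (rename ρ t') := by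
        simp only [rename_rename]
        exact rename_congr (fun n => rfl) t'
      simp only [rename, liftRen, e]
      exact EqTm.arr_eta (hasTyRename h hr)
  | dia_eta h =>
      intro Δ ρ hr
      simp only [rename, liftRen]
      exact EqTm.dia_eta (hasTyRename h hr)
  | dia_beta1 ht hu hu' =>
      intro Δ ρ hr
      simp only [rename, rename_mid]
      exact EqTm.dia_beta1 (hasTyRename ht hr) (hasTyRename hu (hr.lift _))
        (hasTyRename hu' (hr.lift _))
  | dia_beta2 ht hu hu' =>
      intro Δ ρ hr
      simp only [rename, rename_mid]
      exact EqTm.dia_beta2 (hasTyRename ht hr) (hasTyRename hu (hr.lift _))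
        (hasTyRename hu' (hr.lift _))
  | dia_com ht hu hu' =>
      intro Δ ρ hr
      simp only [rename, rename_com]
      exact EqTm.dia_com (hasTyRename ht hr) (hasTyRename hu (hr.lift _))
        (hasTyRename hu' (hr.lift _))
  | dia_ass ht hu hu' =>
      intro Δ ρ hr
      simp only [rename, rename_com]
      exact EqTm.dia_ass (hasTyRename ht hr) (hasTyRename hu (hr.lift _))
        (hasTyRename hu' (hr.lift _))

theorem eqTmHasTy {Γ t u A} (h : EqTm Γ t u A) : HasTy Γ t A ∧ HasTy Γ u A := by
  induction h with
  | refl h => exact ⟨h, h⟩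
  | symm _ ih => exact ⟨ih.2, ih.1⟩
  | trans _ _ ih1 ih2 => exact ⟨ih1.1, ih2.2⟩
  | pair_congr _ _ ih1 ih2 => exact ⟨HasTy.pair ih1.1 ih2.1, HasTy.pair ih1.2 ih2.2⟩
  | fst_congr _ ih => exact ⟨HasTy.fst ih.1, HasTy.fst ih.2⟩
  | snd_congr _ ih => exact ⟨HasTy.snd ih.1, HasTy.snd ih.2⟩
  | lam_congr _ ih => exact ⟨HasTy.lam ih.1, HasTy.lam ih.2⟩
  | app_congr _ _ ih1 ih2 => exact ⟨HasTy.app ih1.1 ih2.1, HasTy.app ih1.2 ih2.2⟩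
  | letm_congr _ _ ih1 ih2 => exact ⟨HasTy.letm ih1.1 ih2.1, HasTy.letm ih1.2 ih2.2⟩
  | letj_congr _ _ ih1 ih2 => exact ⟨HasTy.letj ih1.1 ih2.1, HasTy.letj ih1.2 ih2.2⟩
  | unit_eta h => exact ⟨h, HasTy.unit⟩
  | prod_beta1 ht hu => exact ⟨HasTy.fst (HasTy.pair ht hu), ht⟩
  | prod_beta2 ht hu => exact ⟨HasTy.snd (HasTy.pair ht hu), hu⟩
  | prod_eta h => exact ⟨h, HasTy.pair (HasTy.fst h) (HasTy.snd h)⟩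
  | arr_beta ht hu => exact ⟨HasTy.app (HasTy.lam ht) hu, hasTy_subst0 ht hu⟩
  | arr_eta h =>
      exact ⟨h, HasTy.lam (HasTy.app (hasTyRename h (Ren.succ _ _)) (HasTy.var rfl))⟩
  | dia_eta h => exact ⟨h, HasTy.letm h (HasTy.var rfl)⟩
  | dia_beta1 ht hu hu' =>
      exact ⟨HasTy.letm (HasTy.letm ht hu) hu', HasTy.letm ht (hasTy_mid hu' hu)⟩
  | dia_beta2 ht hu hu' =>
      exact ⟨HasTy.letj (HasTy.letm ht hu) hu', HasTy.letj ht (hasTy_mid hu' hu)⟩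
  | dia_com ht hu hu' =>
      exact ⟨HasTy.letm (HasTy.letj ht hu) hu',
        HasTy.letj ht (HasTy.letm hu (hasTyRename hu' ((Ren.succ _ _).lift _)))⟩
  | dia_ass ht hu hu' =>
      exact ⟨HasTy.letj (HasTy.letj ht hu) hu',
        HasTy.letj ht (HasTy.letj hu (hasTyRename hu' ((Ren.succ _ _).lift _)))⟩

/-! ### The Kripke logical predicate -/

/-- Semantic ◇-computations over a predicate for values. -/
inductive D (P : Ctx → Tm → Prop) : Ctx → Tm → Prop
  | letm {Γ n u B} : Neu Γ n (Ty.dia B) → P (B :: Γ) u → D P Γ (Tm.letm n u)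
  | letj {Γ n u B} : Neu Γ n (Ty.dia B) → D P (B :: Γ) u → D P Γ (Tm.letj n u)

/-- The logical predicate. -/
def Sem : Ty → Ctx → Tm → Prop
  | .base => fun Γ t => ∃ n, Nf Γ n .base ∧ EqTm Γ t n .base
  | .unit => fun Γ t => HasTy Γ t .unit
  | .prod A B => fun Γ t => HasTy Γ t (.prod A B) ∧ Sem A Γ (.fst t) ∧ Sem B Γ (.snd t)
  | .arr A B => fun Γ t => HasTy Γ t (.arr A B) ∧
      ∀ Δ ρ, Ren Δ ρ Γ → ∀ u, Sem A Δ u → Sem B Δ (.app (rename ρ t) u)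
  | .dia A => fun Γ t => HasTy Γ t (.dia A) ∧ ∃ s, D (Sem A) Γ s ∧ EqTm Γ t s (.dia A)

theorem semHasTy : ∀ {A Γ t}, Sem A Γ t → HasTy Γ t A
  | .base, _, _, ⟨_, _, e⟩ => (eqTmHasTy e).1
  | .unit, _, _, h => h
  | .prod _ _, _, _, h => h.1
  | .arr _ _, _, _, h => h.1
  | .dia _, _, _, h => h.1

theorem semConv : ∀ {A Γ t t'}, EqTm Γ t t' A → Sem A Γ t → Sem A Γ t' := by
  intro A
  induction A with
  | base =>
      rintro Γ t t' h ⟨n, nf, e⟩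
      exact ⟨n, nf, (EqTm.symm h).trans e⟩
  | unit => exact fun h _ => (eqTmHasTy h).2
  | prod A B ihA ihB =>
      rintro Γ t t' h ⟨ht, h1, h2⟩
      exact ⟨(eqTmHasTy h).2, ihA (EqTm.fst_congr h) h1, ihB (EqTm.snd_congr h) h2⟩
  | arr A B ihA ihB =>
      rintro Γ t t' h ⟨ht, f⟩
      refine ⟨(eqTmHasTy h).2, fun Δ ρ hr u hu => ?_⟩
      exact ihB (EqTm.app_congr (eqTmRename h hr) (EqTm.refl (semHasTy hu))) (f Δ ρ hr u hu)
  | dia A ihA =>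
      rintro Γ t t' h ⟨ht, s, hs, e⟩
      exact ⟨(eqTmHasTy h).2, s, hs, (EqTm.symm h).trans e⟩

theorem dHasTy {A : Ty} : ∀ {Γ s}, D (Sem A) Γ s → HasTy Γ s (.dia A) := by
  intro Γ s h
  induction h with
  | letm hn hv => exact HasTy.letm (neuHasTy hn) (semHasTy hv)
  | letj hn _ ih => exact HasTy.letj (neuHasTy hn) ih

theorem dRename {P : Ctx → Tm → Prop}
    (hP : ∀ {Γ t Δ ρ}, P Γ t → Ren Δ ρ Γ → P Δ (rename ρ t)) :
    ∀ {Γ s}, D P Γ s → ∀ {Δ ρ}, Ren Δ ρ Γ → D P Δ (rename ρ s) := by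
  intro Γ s h
  induction h with
  | letm hn hv =>
      intro Δ ρ hr
      simp only [rename]
      exact D.letm (neuRename hn hr) (hP hv (hr.lift _))
  | letj hn _ ih =>
      intro Δ ρ hr
      simp only [rename]
      exact D.letj (neuRename hn hr) (ih (hr.lift _))

theorem semRename : ∀ {A Γ t}, Sem A Γ t → ∀ {Δ ρ}, Ren Δ ρ Γ → Sem A Δ (rename ρ t) := by
  intro A
  induction A with
  | base =>
      rintro Γ t ⟨n, nf, e⟩ Δ ρ hr
      exact ⟨rename ρ n, nfRename nf hr, eqTmRename e hr⟩
  | unit => exact fun h _ _ hr => hasTyRename h hr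
  | prod A B ihA ihB =>
      rintro Γ t ⟨ht, h1, h2⟩ Δ ρ hr
      exact ⟨hasTyRename ht hr, ihA h1 hr, ihB h2 hr⟩
  | arr A B ihA ihB =>
      rintro Γ t ⟨ht, f⟩ Δ ρ hr
      refine ⟨hasTyRename ht hr, fun E ρ' hr' u hu => ?_⟩
      rw [rename_rename]
      exact f E _ (hr.comp hr') u hu
  | dia A ihA =>
      rintro Γ t ⟨ht, s, hs, e⟩ Δ ρ hr
      exact ⟨hasTyRename ht hr, rename ρ s,
        dRename (fun h hr => ihA h hr) hs hr, eqTmRename e hr⟩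

/-! ### Reflection and reification -/

theorem reflect_reify (A : Ty) :
    (∀ {Γ n}, Neu Γ n A → Sem A Γ n) ∧
    (∀ {Γ t}, Sem A Γ t → ∃ m, Nf Γ m A ∧ EqTm Γ t m A) := by
  induction A with
  | base =>
      refine ⟨fun {Γ n} h => ?_, fun {Γ t} h => h⟩
      exact ⟨n, Nf.up h, EqTm.refl (neuHasTy h)⟩
  | unit =>
      refine ⟨fun {Γ n} h => neuHasTy h, fun {Γ t} h => ?_⟩
      exact ⟨.unit, Nf.unit, EqTm.unit_eta h⟩
  | prod A B ihA ihB =>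
      constructor
      · intro Γ n h
        exact ⟨neuHasTy h, ihA.1 (Neu.fst h), ihB.1 (Neu.snd h)⟩
      · rintro Γ t ⟨ht, h1, h2⟩
        obtain ⟨m1, nf1, e1⟩ := ihA.2 h1
        obtain ⟨m2, nf2, e2⟩ := ihB.2 h2
        exact ⟨.pair m1 m2, Nf.pair nf1 nf2,
          (EqTm.prod_eta ht).trans (EqTm.pair_congr e1 e2)⟩
  | arr A B ihA ihB =>
      constructor
      · intro Γ n h
        refine ⟨neuHasTy h, fun Δ ρ hr u hu => ?_⟩
        obtain ⟨m, nf, e⟩ := ihA.2 hu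
        have hb : Sem B Δ (.app (rename ρ n) m) := ihB.1 (Neu.app (neuRename h hr) nf)
        exact semConv
          (EqTm.app_congr (EqTm.refl (hasTyRename (neuHasTy h) hr)) (EqTm.symm e)) hb
      · rintro Γ t ⟨ht, f⟩
        have hv : Sem A (A :: Γ) (.var 0) := ihA.1 (Neu.var rfl)
        have hb : Sem B (A :: Γ) (.app (rename Nat.succ t) (.var 0)) :=
          f (A :: Γ) Nat.succ (Ren.succ A Γ) _ hv
        obtain ⟨m, nf, e⟩ := ihB.2 hb
        exact ⟨.lam m, Nf.lam nf, (EqTm.arr_eta ht).trans (EqTm.lam_congr e)⟩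
  | dia A ihA =>
      constructor
      · intro Γ n h
        exact ⟨neuHasTy h, .letm n (.var 0),
          D.letm h (ihA.1 (Neu.var rfl)), EqTm.dia_eta (neuHasTy h)⟩
      · rintro Γ t ⟨ht, s, hs, e⟩
        have key : ∀ {Γ s}, D (Sem A) Γ s → ∃ m, Nf Γ m (.dia A) ∧ EqTm Γ s m (.dia A) := by
          intro Γ s hs
          induction hs with
          | letm hn hv =>
              obtain ⟨m, nf, e'⟩ := ihA.2 hv
              exact ⟨.letm _ m, Nf.letm hn nf,
                EqTm.letm_congr (EqTm.refl (neuHasTy hn)) e'⟩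
          | letj hn _ ih =>
              obtain ⟨m, nf, e'⟩ := ih
              exact ⟨.letj _ m, Nf.letj hn nf,
                EqTm.letj_congr (EqTm.refl (neuHasTy hn)) e'⟩
        obtain ⟨m, nf, e'⟩ := key hs
        exact ⟨m, nf, e.trans e'⟩

theorem reflectSem {A Γ n} (h : Neu Γ n A) : Sem A Γ n := (reflect_reify A).1 h

theorem reifySem {A Γ t} (h : Sem A Γ t) : ∃ m, Nf Γ m A ∧ EqTm Γ t m A :=
  (reflect_reify A).2 h

/-! ### The fundamental lemma -/

def SemEnv (Δ : Ctx) (σ : ℕ → Tm) (Γ : Ctx) : Prop :=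
  ∀ n A, Γ[n]? = some A → Sem A Δ (σ n)

theorem SemEnv.subTy {Δ σ Γ} (h : SemEnv Δ σ Γ) : SubTy Δ σ Γ :=
  fun n A hn => semHasTy (h n A hn)

theorem SemEnv.rename {Δ σ Γ E ρ} (h : SemEnv Δ σ Γ) (hr : Ren E ρ Δ) :
    SemEnv E (fun n => rename ρ (σ n)) Γ :=
  fun n A hn => semRename (h n A hn) hr

theorem SemEnv.cons {Δ σ Γ A u} (hu : Sem A Δ u) (h : SemEnv Δ σ Γ) :
    SemEnv Δ (scons u σ) (A :: Γ) := by
  intro n B hn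
  cases n with
  | zero =>
      obtain rfl : A = B := by simpa using hn
      exact hu
  | succ n => exact h n B hn

theorem SemEnv.lift {Δ σ Γ} (h : SemEnv Δ σ Γ) (A : Ty) :
    SemEnv (A :: Δ) (liftSub σ) (A :: Γ) := by
  intro n B hn
  cases n with
  | zero =>
      obtain rfl : A = B := by simpa using hn
      exact reflectSem (Neu.var rfl)
  | succ n => exact semRename (h n B hn) (Ren.succ A Δ)

theorem subst0_lift_eq (v : Tm) (σ : ℕ → Tm) (u : Tm) :
    subst 0 v (rename (liftRen Nat.succ) (ssub (liftSub σ) u)) =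
      ssub (scons v (fun k => rename Nat.succ (σ k))) u := by
  rw [subst0_eq, rename_ssub, ssub_ssub]
  refine ssub_congr (fun n => ?_) u
  cases n with
  | zero => rfl
  | succ k =>
      show ssub (scons v Tm.var) (rename (liftRen Nat.succ) (rename Nat.succ (σ k))) =
        rename Nat.succ (σ k)
      rw [rename_rename, ssub_rename, rename_eq_ssub]
      exact ssub_congr (fun m => rfl) (σ k)

theorem rename_lift_eq (σ : ℕ → Tm) (u : Tm) :
    rename (liftRen Nat.succ) (ssub (liftSub σ) u) =
      ssub (liftSub (fun k => rename Nat.succ (σ k))) u := by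
  rw [rename_ssub]
  refine ssub_congr (fun n => ?_) u
  cases n with
  | zero => rfl
  | succ k =>
      show rename (liftRen Nat.succ) (rename Nat.succ (σ k)) =
        rename Nat.succ (rename Nat.succ (σ k))
      rw [rename_rename, rename_rename]
      exact rename_congr (fun m => rfl) (σ k)

theorem semLetm {Γ : Ctx} {A B : Ty} {u : Tm}
    (ihu : ∀ {Δ σ}, SemEnv Δ σ (A :: Γ) → Sem B Δ (ssub σ u)) :
    ∀ {Δ s}, D (Sem A) Δ s → ∀ {σ}, SemEnv Δ σ Γ →
      ∃ s', D (Sem B) Δ s' ∧ EqTm Δ (.letm s (ssub (liftSub σ) u)) s' (.dia B) := by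
  intro Δ s hs
  induction hs with
  | @letm Δ n v B' hn hv =>
      intro σ hσ
      have hτ : SemEnv (B' :: Δ) (scons v (fun k => rename Nat.succ (σ k))) (A :: Γ) :=
        (hσ.rename (Ren.succ B' Δ)).cons hv
      have hw : Sem B (B' :: Δ) (ssub (scons v (fun k => rename Nat.succ (σ k))) u) := ihu hτ
      refine ⟨.letm n _, D.letm hn hw, ?_⟩
      have hty_u : HasTy (A :: Δ) (ssub (liftSub σ) u) B := semHasTy (ihu (hσ.lift A))
      have e := EqTm.dia_beta1 (neuHasTy hn) (semHasTy hv) hty_u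
      rwa [subst0_lift_eq] at e
  | @letj Δ n c B' hn hc ih =>
      intro σ hσ
      obtain ⟨c', hc', e'⟩ := ih (hσ.rename (Ren.succ B' Δ))
      refine ⟨.letj n c', D.letj hn hc', ?_⟩
      have hty_u : HasTy (A :: Δ) (ssub (liftSub σ) u) B := semHasTy (ihu (hσ.lift A))
      have e := EqTm.dia_com (neuHasTy hn) (dHasTy hc) hty_u
      rw [rename_lift_eq] at e
      exact e.trans (EqTm.letj_congr (EqTm.refl (neuHasTy hn)) e')

theorem semLetj {Γ : Ctx} {A B : Ty} {u : Tm}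
    (ihu : ∀ {Δ σ}, SemEnv Δ σ (A :: Γ) → Sem (.dia B) Δ (ssub σ u)) :
    ∀ {Δ s}, D (Sem A) Δ s → ∀ {σ}, SemEnv Δ σ Γ →
      ∃ s', D (Sem B) Δ s' ∧ EqTm Δ (.letj s (ssub (liftSub σ) u)) s' (.dia B) := by
  intro Δ s hs
  induction hs with
  | @letm Δ n v B' hn hv =>
      intro σ hσ
      have hτ : SemEnv (B' :: Δ) (scons v (fun k => rename Nat.succ (σ k))) (A :: Γ) :=
        (hσ.rename (Ren.succ B' Δ)).cons hv
      obtain ⟨hwty, c, hcD, ec⟩ := ihu hτ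
      refine ⟨.letj n c, D.letj hn hcD, ?_⟩
      have hty_u : HasTy (A :: Δ) (ssub (liftSub σ) u) (.dia B) := semHasTy (ihu (hσ.lift A))
      have e := EqTm.dia_beta2 (neuHasTy hn) (semHasTy hv) hty_u
      rw [subst0_lift_eq] at e
      exact e.trans (EqTm.letj_congr (EqTm.refl (neuHasTy hn)) ec)
  | @letj Δ n c B' hn hc ih =>
      intro σ hσ
      obtain ⟨c', hc', e'⟩ := ih (hσ.rename (Ren.succ B' Δ))
      refine ⟨.letj n c', D.letj hn hc', ?_⟩
      have hty_u : HasTy (A :: Δ) (ssub (liftSub σ) u) (.dia B) := semHasTy (ihu (hσ.lift A))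
      have e := EqTm.dia_ass (neuHasTy hn) (dHasTy hc) hty_u
      rw [rename_lift_eq] at e
      exact e.trans (EqTm.letj_congr (EqTm.refl (neuHasTy hn)) e')

theorem subst0_beta_eq (v : Tm) (ρ : ℕ → ℕ) (σ : ℕ → Tm) (t : Tm) :
    subst 0 v (rename (liftRen ρ) (ssub (liftSub σ) t)) =
      ssub (scons v (fun k => rename ρ (σ k))) t := by
  rw [subst0_eq, rename_ssub, ssub_ssub]
  refine ssub_congr (fun n => ?_) t
  cases n with
  | zero => rfl
  | succ k =>
      show ssub (scons v Tm.var) (rename (liftRen ρ) (rename Nat.succ (σ k))) =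
        rename ρ (σ k)
      rw [rename_rename, ssub_rename, rename_eq_ssub]
      exact ssub_congr (fun m => rfl) (σ k)

theorem fund {Γ t A} (h : HasTy Γ t A) :
    ∀ {Δ σ}, SemEnv Δ σ Γ → Sem A Δ (ssub σ t) := by
  induction h with
  | var h => exact fun hσ => hσ _ _ h
  | unit => exact fun _ => HasTy.unit
  | pair ht hu ih1 ih2 =>
      intro Δ σ hσ
      have h1 := ih1 hσ
      have h2 := ih2 hσ
      have ht1 := semHasTy h1
      have ht2 := semHasTy h2
      exact ⟨HasTy.pair ht1 ht2,
        semConv (EqTm.symm (EqTm.prod_beta1 ht1 ht2)) h1,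
        semConv (EqTm.symm (EqTm.prod_beta2 ht1 ht2)) h2⟩
  | fst _ ih => exact fun hσ => (ih hσ).2.1
  | snd _ ih => exact fun hσ => (ih hσ).2.2
  | @lam Γ' t' A' B' ht ih =>
      intro Δ σ hσ
      have hlam : HasTy Δ (.lam (ssub (liftSub σ) t')) (.arr A' B') :=
        HasTy.lam (hasTySsub ht (hσ.subTy.lift _))
      refine ⟨hlam, fun E ρ hr v hv => ?_⟩
      have henv : SemEnv E (scons v (fun k => rename ρ (σ k))) (A' :: Γ') :=
        (hσ.rename hr).cons hv
      have hbody := ih henv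
      have hwty : HasTy (A' :: E) (rename (liftRen ρ) (ssub (liftSub σ) t')) B' :=
        hasTyRename (hasTySsub ht (hσ.subTy.lift _)) (hr.lift _)
      have hb := EqTm.arr_beta hwty (semHasTy hv)
      rw [subst0_beta_eq] at hb
      exact semConv (EqTm.symm hb) hbody
  | app ht hu ih1 ih2 =>
      intro Δ σ hσ
      have happ := (ih1 hσ).2 Δ (fun n => n) (Ren.id Δ) _ (ih2 hσ)
      rwa [rename_id] at happ
  | letm ht hu ih1 ih2 =>
      intro Δ σ hσ
      obtain ⟨hty, s, hsD, es⟩ := ih1 hσ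
      obtain ⟨s', hs'D, e'⟩ := semLetm (fun {Δ σ} hτ => ih2 hτ) hsD hσ
      have htyu : HasTy _ (ssub (liftSub σ) _) _ := hasTySsub hu (hσ.subTy.lift _)
      exact ⟨HasTy.letm hty htyu, s', hs'D,
        (EqTm.letm_congr es (EqTm.refl htyu)).trans e'⟩
  | letj ht hu ih1 ih2 =>
      intro Δ σ hσ
      obtain ⟨hty, s, hsD, es⟩ := ih1 hσ
      obtain ⟨s', hs'D, e'⟩ := semLetj (fun {Δ σ} hτ => ih2 hτ) hsD hσ
      have htyu : HasTy _ (ssub (liftSub σ) _) _ := hasTySsub hu (hσ.subTy.lift _)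
      exact ⟨HasTy.letj hty htyu, s', hs'D,
        (EqTm.letj_congr es (EqTm.refl htyu)).trans e'⟩

theorem idSemEnv (Γ : Ctx) : SemEnv Γ (fun n => .var n) Γ :=
  fun _ _ h => reflectSem (Neu.var h)

end JLCaux

/-- STATEMENT 13: correctness of normalization for JLC: every well-typed term
`Γ ⊢ t : A` has a normal form `Γ ⊢nf n : A` with `Γ ⊢ t ≡ n : A`. -/
theorem normalization_correct_JLC {Γ : Ctx} {t : Tm} {A : Ty}
    (ht : HasTy Γ t A) : ∃ n : Tm, Nf Γ n A ∧ EqTm Γ t n A := by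
  have hsem := JLCaux.fund ht (JLCaux.idSemEnv Γ)
  rw [JLCaux.ssub_var] at hsem
  exact JLCaux.reifySem hsem
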